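/- Suppose f : ℝ^d → ℝ is L_f-smooth and ρ_f-weakly convex, h : ℝ^d → ℝ is L_h-smooth, g : ℝ^d → ℝ ∪ {+∞} is proper, lower semicontinuous and ρ-weakly convex, and let γ ∈ (0, min{1/ρ, 1/ρ_f}) and λ > 0. Let sequences (z^k), (x^k), (y^k) in ℝ^d satisfy, for every k: x^k is the unique minimizer over u ∈ ℝ^d of f(u) + (1/(2γ))‖u − z^k‖²; y^k is the unique minimizer over y ∈ ℝ^d of g(y) + (1/(2γ))‖y − (2x^k − z^k − γ∇h(x^k))‖²; and z^{k+1} = z^k + λ(y^k − x^k). Then for every k: y^k equals the unique minimizer over y ∈ ℝ^d of g(y) + (1/(2γ))‖y − (x^k − γ∇(f+h)(x^k))‖², and x^{k+1} equals the unique minimizer over u ∈ ℝ^d of f(u) + (1/(2γ))‖u − ((1 − λ)x^k + γ∇f(x^k) + λy^k)‖². -/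

import Mathlib

open scoped RealInnerProductSpace

lemma min_grad_eq {E : Type*} [NormedAddCommGroup E] [InnerProductSpace ℝ E] [CompleteSpace E]
    (f : E → ℝ) (hfd : Differentiable ℝ f) {γ : ℝ} (hγ : 0 < γ) (z p : E)
    (hmin : ∀ u, f p + 1 / (2 * γ) * ‖p - z‖ ^ 2 ≤ f u + 1 / (2 * γ) * ‖u - z‖ ^ 2) :
    z = p + γ • gradient f p := by
  have hψ : HasFDerivAt (fun u : E => ‖u - z‖ ^ 2) (2 • (innerSL ℝ (p - z))) p := by
    simpa using ((hasFDerivAt_id p).sub_const z).norm_sq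
  have hφ : HasFDerivAt (fun u : E => f u + 1 / (2 * γ) * ‖u - z‖ ^ 2)
      (fderiv ℝ f p + (1 / (2 * γ)) • (2 • (innerSL ℝ (p - z)))) p :=
    (hfd p).hasFDerivAt.add (hψ.const_mul _)
  have hloc : IsLocalMin (fun u : E => f u + 1 / (2 * γ) * ‖u - z‖ ^ 2) p :=
    Filter.Eventually.of_forall hmin
  have h0 := hloc.fderiv_eq_zero
  rw [hφ.fderiv] at h0
  have hfg : fderiv ℝ f p = InnerProductSpace.toDual ℝ E (gradient f p) :=
    ((hfd p).hasGradientAt.hasFDerivAt).fderiv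
  have h1 : ∀ v : E, ⟪gradient f p, v⟫ + (1 / (2 * γ)) * (2 * ⟪p - z, v⟫) = 0 := by
    intro v
    have hthis := congrFun (congrArg DFunLike.coe h0) v
    simp only [hfg, ContinuousLinearMap.add_apply, ContinuousLinearMap.smul_apply,
      ContinuousLinearMap.zero_apply, InnerProductSpace.toDual_apply_apply, innerSL_apply_apply,
      smul_eq_mul, nsmul_eq_mul, Nat.cast_ofNat] at hthis
    linarith [hthis]
  set w := gradient f p + γ⁻¹ • (p - z) with hw
  have h2 : ⟪w, w⟫ = 0 := by
    have hv := h1 w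
    have key : (1 : ℝ) / (2 * γ) * (2 * ⟪p - z, w⟫) = γ⁻¹ * ⟪p - z, w⟫ := by
      field_simp
    rw [key] at hv
    rw [← real_inner_smul_left, ← inner_add_left] at hv
    exact hv
  have hw0 : w = 0 := inner_self_eq_zero.mp h2
  have h3 : γ • gradient f p + (p - z) = 0 := by
    have := congrArg (γ • ·) hw0
    simpa [hw, smul_add, smul_smul, mul_inv_cancel₀ (ne_of_gt hγ)] using this
  have h4 : p + γ • gradient f p - z = 0 := by rw [← h3]; abel
  exact (sub_eq_zero.mp h4).symm

/-- `g` is `ρ`-weakly convex: `g + (ρ/2)‖·‖²` is convex (extended-real-valued version). -/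
def WeaklyConvexE {E : Type*} [NormedAddCommGroup E] [InnerProductSpace ℝ E]
    (ρ : ℝ) (g : E → EReal) : Prop :=
  ∀ x y : E, ∀ t : ℝ, 0 ≤ t → t ≤ 1 →
    g (t • x + (1 - t) • y) + (((ρ / 2) * ‖t • x + (1 - t) • y‖ ^ 2 : ℝ) : EReal) ≤
      (t : EReal) * (g x + (((ρ / 2) * ‖x‖ ^ 2 : ℝ) : EReal)) +
        ((1 - t : ℝ) : EReal) * (g y + (((ρ / 2) * ‖y‖ ^ 2 : ℝ) : EReal))

theorem shadow_DY_equivalence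
    {E : Type*} [NormedAddCommGroup E] [InnerProductSpace ℝ E] [FiniteDimensional ℝ E]
    (f h : E → ℝ) (g : E → EReal) (Lf Lh ρ ρf : ℝ)
    (hLf : 0 ≤ Lf) (hLh : 0 ≤ Lh) (hρ : 0 ≤ ρ) (hρf : 0 ≤ ρf)
    (hfd : Differentiable ℝ f)
    (hflip : ∀ x y : E, ‖gradient f x - gradient f y‖ ≤ Lf * ‖x - y‖)
    (hfwc : ConvexOn ℝ Set.univ (fun x : E => f x + (ρf / 2) * ‖x‖ ^ 2))
    (hhd : Differentiable ℝ h)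
    (hhlip : ∀ x y : E, ‖gradient h x - gradient h y‖ ≤ Lh * ‖x - y‖)
    (hgtop : ∃ x, g x ≠ ⊤) (hgbot : ∀ x, g x ≠ ⊥)
    (hglsc : LowerSemicontinuous g)
    (hwc : WeaklyConvexE ρ g)
    (γ lam : ℝ) (hγ0 : 0 < γ) (hγρ : γ * ρ < 1) (hγρf : γ * ρf < 1) (hlam : 0 < lam)
    (z x y : ℕ → E)
    (hx : ∀ k, ∀ u : E,
      f (x k) + 1 / (2 * γ) * ‖x k - z k‖ ^ 2 ≤ f u + 1 / (2 * γ) * ‖u - z k‖ ^ 2)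
    (hy : ∀ k, ∀ w : E,
      g (y k) + ((1 / (2 * γ) *
        ‖y k - (2 • x k - z k - γ • gradient h (x k))‖ ^ 2 : ℝ) : EReal) ≤
      g w + ((1 / (2 * γ) *
        ‖w - (2 • x k - z k - γ • gradient h (x k))‖ ^ 2 : ℝ) : EReal))
    (hz : ∀ k, z (k + 1) = z k + lam • (y k - x k)) :
    ∀ k : ℕ,
      (∀ w : E,
        g (y k) + ((1 / (2 * γ) *
          ‖y k - (x k - γ • gradient (fun v => f v + h v) (x k))‖ ^ 2 : ℝ) : EReal) ≤
        g w + ((1 / (2 * γ) *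
          ‖w - (x k - γ • gradient (fun v => f v + h v) (x k))‖ ^ 2 : ℝ) : EReal)) ∧
      (∀ u : E,
        f (x (k + 1)) + 1 / (2 * γ) *
          ‖x (k + 1) - ((1 - lam) • x k + γ • gradient f (x k) + lam • y k)‖ ^ 2 ≤
        f u + 1 / (2 * γ) *
          ‖u - ((1 - lam) • x k + γ • gradient f (x k) + lam • y k)‖ ^ 2) := by

  have hzk : ∀ k, z k = x k + γ • gradient f (x k) :=
    fun k => min_grad_eq f hfd hγ0 (z k) (x k) (hx k)
  have hgsum : ∀ p : E, gradient (fun v => f v + h v) p = gradient f p + gradient h p := by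
    intro p
    have hadd : fderiv ℝ (fun v => f v + h v) p = fderiv ℝ f p + fderiv ℝ h p :=
      fderiv_add (hfd p) (hhd p)
    simp only [gradient, hadd, map_add]
  intro k
  constructor
  · intro w
    have hpt : x k - γ • gradient (fun v => f v + h v) (x k) =
        2 • x k - z k - γ • gradient h (x k) := by
      rw [hgsum, hzk k, smul_add, two_smul]
      abel
    rw [hpt]
    exact hy k w
  · intro u
    have hpt : (1 - lam) • x k + γ • gradient f (x k) + lam • y k = z (k + 1) := by
      rw [hz k, hzk k, sub_smul, one_smul, smul_sub]
      abel
    rw [hpt]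
    exact hx (k + 1) u
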